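/- Let K ⊆ ℝ² be a compact convex set with nonempty interior, and let p, x ∈ ∂K be distinct points such that the segment px is not an affine diameter of K (i.e., there do not exist parallel supporting lines of K at p and x). Then there exist points q, y ∈ ∂K such that pxqy is a nondegenerate parallelogram, i.e., p + q = x + y and p, x, q are not collinear. -/

import Mathlib

noncomputable section

abbrev Pt := EuclideanSpace ℝ (Fin 2)

/-- A set of points is in convex position if every point is an extreme point
of the convex hull of the set. -/
def InConvexPos (S : Set Pt) : Prop :=
  ∀ p ∈ S, p ∈ Set.extremePoints ℝ (convexHull ℝ S)

/-- The reflection of the set `S` through the point `O`. -/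
def reflSet (O : Pt) (S : Set Pt) : Set Pt := (fun x => (2 : ℝ) • O - x) '' S

/-- `O` is an admissible center for `S` if `S ∪ (2O - S)` is in convex position. -/
def AdmissibleCenter (O : Pt) (S : Set Pt) : Prop := InConvexPos (S ∪ reflSet O S)

/-- A set is in centrally symmetric convex position if it admits an admissible center. -/
def CSCPos (S : Set Pt) : Prop := ∃ O : Pt, AdmissibleCenter O S

/-- `u` is an outer supporting normal of `K` at the boundary point `p`. -/
def IsSupportNormalAt (K : Set Pt) (u p : Pt) : Prop :=
  p ∈ K ∧ ∀ x ∈ K, (inner ℝ u x : ℝ) ≤ inner ℝ u p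

open Set Metric Filter Topology Pointwise

/-! ### Auxiliary lemmas -/

/-- A convex set with an interior point is contained in the closure of its interior. -/
lemma aux_subset_closure_interior {K : Set Pt} (hc : Convex ℝ K)
    {o : Pt} (ho : o ∈ interior K) : K ⊆ closure (interior K) := by
  intro z hz
  have hmem : ∀ n : ℕ, (1 / ((n : ℝ) + 1)) • o + (1 - 1 / ((n : ℝ) + 1)) • z ∈ interior K := by
    intro n
    refine hc.combo_interior_closure_mem_interior ho (subset_closure hz) (by positivity) ?_
      (by ring)
    have h1 : 1 / ((n : ℝ) + 1) ≤ 1 := by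
      rw [div_le_one (by positivity)]
      linarith [Nat.cast_nonneg (α := ℝ) n]
    linarith
  have h1 : Tendsto (fun n : ℕ => (1 / ((n : ℝ) + 1)) • o + (1 - 1 / ((n : ℝ) + 1)) • z)
      atTop (𝓝 ((0 : ℝ) • o + (1 - (0 : ℝ)) • z)) := by
    exact ((tendsto_one_div_add_atTop_nhds_zero_nat).smul_const o).add
      (((tendsto_const_nhds.sub tendsto_one_div_add_atTop_nhds_zero_nat)).smul_const z)
  simp only [zero_smul, sub_zero, one_smul, zero_add] at h1
  exact mem_closure_of_tendsto h1 (Filter.Eventually.of_forall hmem)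

/-- If a continuous linear functional is `< c` on the interior of a closed convex set with
nonempty interior, it is `≤ c` on the whole set. -/
lemma aux_le_on_closed {K : Set Pt} (hKcl : IsClosed K) (hc : Convex ℝ K)
    {o : Pt} (ho : o ∈ interior K) {f : Pt →L[ℝ] ℝ} {c : ℝ}
    (h : ∀ a ∈ interior K, f a < c) : ∀ b ∈ K, f b ≤ c := by
  intro b hb
  have h1 : K ⊆ closure (interior K) := aux_subset_closure_interior hc ho
  have h2 : closure (interior K) ⊆ {a : Pt | f a ≤ c} :=
    closure_minimal (fun a ha => (h a ha).le) (isClosed_le f.continuous continuous_const)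
  exact h2 (h1 hb)

/-- Points strictly between two points on a parametrized line. -/
lemma aux_seg_param {a w : Pt} {t₀ t₁ t : ℝ} (h₀ : t₀ < t) (h₁ : t < t₁) :
    a + t • w ∈ openSegment ℝ (a + t₀ • w) (a + t₁ • w) := by
  rw [openSegment_eq_image']
  have hpos : (0:ℝ) < t₁ - t₀ := by linarith
  refine ⟨(t - t₀) / (t₁ - t₀), ⟨div_pos (by linarith) hpos, ?_⟩, ?_⟩
  · rw [div_lt_one hpos]; linarith
  · have hne : t₁ - t₀ ≠ 0 := hpos.ne'
    have h5 : a + t₁ • w - (a + t₀ • w) = (t₁ - t₀) • w := by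
      rw [sub_smul]; abel
    show a + t₀ • w + ((t - t₀) / (t₁ - t₀)) • (a + t₁ • w - (a + t₀ • w)) = a + t • w
    rw [h5, smul_smul, div_mul_cancel₀ _ hne]
    have : t₀ • w + (t - t₀) • w = t • w := by rw [← add_smul]; ring_nf
    rw [add_assoc, this]

/-- A point of the frontier cannot be in the open segment from an interior point to a point
of the set. -/
lemma aux_no_between {K : Set Pt} (hc : Convex ℝ K) {a b z : Pt} (ha : a ∈ interior K)
    (hb : b ∈ K) (hz : z ∈ frontier K) (h : z ∈ openSegment ℝ a b) : False := by
  rw [← closure_diff_interior] at hz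
  exact hz.2 (hc.openSegment_interior_self_subset_interior ha hb h)

/-- If a compact convex body `M` with `0` in its interior is contained in a convex set `K`
and `frontier M ⊆ frontier K`, then `K ⊆ M`. -/
lemma aux_body_eq_zero {M K : Set Pt} (hM : IsCompact M) (hMconv : Convex ℝ M)
    (h0 : (0 : Pt) ∈ interior M) (hKconv : Convex ℝ K)
    (hMK : M ⊆ K) (hfr : frontier M ⊆ frontier K) : K ⊆ M := by
  intro k hk
  by_contra hkM
  have hnhds : M ∈ 𝓝 (0 : Pt) := mem_interior_iff_mem_nhds.1 h0
  have hg1 : 1 < gauge M k := by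
    by_contra h
    push_neg at h
    exact hkM (hM.isClosed.closure_eq ▸ (gauge_le_one_iff_mem_closure hMconv hnhds).1 h)
  have hgpos : (0 : ℝ) < gauge M k := lt_trans one_pos hg1
  have ht0 : (0 : ℝ) < (gauge M k)⁻¹ := inv_pos.2 hgpos
  have ht1 : (gauge M k)⁻¹ < 1 := inv_lt_one_of_one_lt₀ hg1
  have hgt : gauge M ((gauge M k)⁻¹ • k) = 1 := by
    rw [gauge_smul_of_nonneg ht0.le, smul_eq_mul, inv_mul_cancel₀ hgpos.ne']
  have hfrt : (gauge M k)⁻¹ • k ∈ frontier M :=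
    (gauge_eq_one_iff_mem_frontier hMconv hnhds).1 hgt
  refine aux_no_between hKconv (interior_mono hMK h0) hk (hfr hfrt) ?_
  rw [openSegment_eq_image']
  exact ⟨(gauge M k)⁻¹, ⟨ht0, ht1⟩, by simp⟩

/-- Translation of a set as an image under a homeomorphism. -/
lemma aux_vadd_image (v : Pt) (S : Set Pt) : (Homeomorph.addLeft v) '' S = v +ᵥ S := by
  rw [← Set.image_vadd]
  rfl

lemma aux_mem_vadd (v : Pt) (S : Set Pt) (z : Pt) : z ∈ v +ᵥ S ↔ z - v ∈ S := by
  rw [Set.mem_vadd_set_iff_neg_vadd_mem, vadd_eq_add, neg_add_eq_sub]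

/-- General-basepoint version of `aux_body_eq_zero`. -/
lemma aux_body_eq {M K : Set Pt} (hM : IsCompact M) (hMconv : Convex ℝ M)
    {o : Pt} (ho : o ∈ interior M) (hKconv : Convex ℝ K)
    (hMK : M ⊆ K) (hfr : frontier M ⊆ frontier K) : K ⊆ M := by
  set e : Pt ≃ₜ Pt := Homeomorph.addLeft (-o) with he
  have himg : ∀ S : Set Pt, e '' S = (-o) +ᵥ S := fun S => aux_vadd_image (-o) S
  have hM0 : IsCompact (e '' M) := hM.image e.continuous
  have hM0conv : Convex ℝ (e '' M) := by rw [himg]; exact hMconv.vadd _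
  have h00 : (0 : Pt) ∈ interior (e '' M) := by
    rw [← e.image_interior]
    exact ⟨o, ho, by simp [he]⟩
  have hK0conv : Convex ℝ (e '' K) := by rw [himg]; exact hKconv.vadd _
  have hMK0 : e '' M ⊆ e '' K := Set.image_mono hMK
  have hfr0 : frontier (e '' M) ⊆ frontier (e '' K) := by
    rw [← e.image_frontier, ← e.image_frontier]
    exact Set.image_mono hfr
  have := aux_body_eq_zero hM0 hM0conv h00 hK0conv hMK0 hfr0
  intro k hk
  have : e k ∈ e '' M := this ⟨k, hk, rfl⟩
  obtain ⟨m, hm, hme⟩ := this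
  rwa [← e.injective hme]

/-- The unit sphere minus a point is preconnected. -/
lemma aux_sphere_compl_preconnected {v : Pt} (hv : ‖v‖ = 1) :
    IsPreconnected (sphere (0 : Pt) 1 \ {v}) := by
  set e := stereographic hv with he
  have h1 : IsPreconnected (e.target) := by
    rw [he, stereographic_target]
    exact (convex_univ : Convex ℝ (univ : Set ↥(Submodule.span ℝ {v})ᗮ)).isPreconnected
  have h2 : IsPreconnected e.source := by
    rw [← e.symm_image_target_eq_source]
    exact h1.image _ e.continuousOn_symm
  have h3 : IsPreconnected ((Subtype.val : sphere (0 : Pt) 1 → Pt) '' e.source) :=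
    h2.image _ continuous_subtype_val.continuousOn
  have h4 : (Subtype.val : sphere (0 : Pt) 1 → Pt) '' e.source = sphere (0 : Pt) 1 \ {v} := by
    rw [he, stereographic_source]
    ext z
    constructor
    · rintro ⟨u, hu, rfl⟩
      refine ⟨u.2, ?_⟩
      intro hz
      exact hu (Subtype.ext hz)
    · rintro ⟨hz, hzv⟩
      exact ⟨⟨z, hz⟩, fun h => hzv (by simpa using congrArg Subtype.val h), rfl⟩
  rwa [h4] at h3

/-- The frontier of a compact convex body, minus one point, is preconnected
(case `0 ∈ interior M`). -/
lemma aux_punctured_frontier_zero {M : Set Pt} (hM : IsCompact M) (hMconv : Convex ℝ M)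
    (h0 : (0 : Pt) ∈ interior M) {x : Pt} (hx : x ∈ frontier M) :
    IsPreconnected (frontier M \ {x}) := by
  have hnhds : M ∈ 𝓝 (0 : Pt) := mem_interior_iff_mem_nhds.1 h0
  have habs : Absorbent ℝ M := absorbent_nhds_zero hnhds
  have hvb : Bornology.IsVonNBounded ℝ M := (NormedSpace.isVonNBounded_iff ℝ).2 hM.isBounded
  have hfr_ne_zero : ∀ z : Pt, z ∈ frontier M → z ≠ 0 := by
    intro z hz hz0
    rw [← closure_diff_interior] at hz
    exact hz.2 (hz0 ▸ h0)
  have hgauge_one : ∀ z : Pt, z ∈ frontier M → gauge M z = 1 := fun z hz =>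
    (gauge_eq_one_iff_mem_frontier hMconv hnhds).2 hz
  have hx0 : x ≠ 0 := hfr_ne_zero x hx
  have hxnorm : (0 : ℝ) < ‖x‖ := norm_pos_iff.2 hx0
  set v : Pt := ‖x‖⁻¹ • x with hvdef
  have hvnorm : ‖v‖ = 1 := by
    rw [hvdef, norm_smul, norm_inv, norm_norm, inv_mul_cancel₀ hxnorm.ne']
  set ψ : Pt → Pt := fun u => (gauge M u)⁻¹ • u with hψ
  have hψcont : ContinuousOn ψ (sphere (0 : Pt) 1 \ {v}) := by
    refine ContinuousOn.smul (f := fun u => (gauge M u)⁻¹) (g := id) ?_ ?_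
    · apply ContinuousOn.inv₀ (continuous_gauge hMconv hnhds).continuousOn
      intro u hu
      have hu0 : u ≠ 0 := by
        intro h
        have := mem_sphere_zero_iff_norm.1 hu.1
        rw [h] at this; simp at this
      exact ((gauge_pos habs hvb).2 hu0).ne'
    · exact continuousOn_id
  have key : ψ '' (sphere (0 : Pt) 1 \ {v}) = frontier M \ {x} := by
    apply Set.Subset.antisymm
    · rintro _ ⟨u, ⟨husph, hune⟩, rfl⟩
      have hu0 : u ≠ 0 := by
        intro h
        have := mem_sphere_zero_iff_norm.1 husph
        rw [h] at this; simp at this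
      have hunorm : ‖u‖ = 1 := mem_sphere_zero_iff_norm.1 husph
      have hgu : (0 : ℝ) < gauge M u := (gauge_pos habs hvb).2 hu0
      have hfrψ : ψ u ∈ frontier M := by
        apply (gauge_eq_one_iff_mem_frontier hMconv hnhds).1
        rw [hψ]
        simp only
        rw [gauge_smul_of_nonneg (inv_pos.2 hgu).le, smul_eq_mul, inv_mul_cancel₀ hgu.ne']
      refine ⟨hfrψ, ?_⟩
      intro hψx
      rw [Set.mem_singleton_iff] at hψx
      apply hune
      rw [Set.mem_singleton_iff]
      have hxx : x = (gauge M u)⁻¹ • u := hψx.symm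
      have : v = (‖x‖⁻¹ * (gauge M u)⁻¹) • u := by
        rw [hvdef, hxx, smul_smul]
      have hcoef : ‖x‖⁻¹ * (gauge M u)⁻¹ = 1 := by
        have h1 : ‖v‖ = (‖x‖⁻¹ * (gauge M u)⁻¹) * ‖u‖ := by
          rw [this, norm_smul, Real.norm_eq_abs,
            abs_of_nonneg (by positivity)]
        rw [hvnorm, hunorm, mul_one] at h1
        exact h1.symm
      rw [this, hcoef, one_smul]
    · rintro z ⟨hzfr, hzx⟩
      rw [Set.mem_singleton_iff] at hzx
      have hz0 : z ≠ 0 := hfr_ne_zero z hzfr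
      have hznorm : (0 : ℝ) < ‖z‖ := norm_pos_iff.2 hz0
      refine ⟨‖z‖⁻¹ • z, ⟨?_, ?_⟩, ?_⟩
      · rw [mem_sphere_zero_iff_norm, norm_smul, norm_inv, norm_norm,
          inv_mul_cancel₀ hznorm.ne']
      · intro h
        rw [Set.mem_singleton_iff] at h
        apply hzx
        -- from ‖z‖⁻¹ • z = ‖x‖⁻¹ • x deduce z = x using gauge = 1 on both
        have hz1 : gauge M z = 1 := hgauge_one z hzfr
        have hx1 : gauge M x = 1 := hgauge_one x hx
        have h2 : z = (‖z‖ * ‖x‖⁻¹) • x := by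
          have h' : ‖z‖ • (‖z‖⁻¹ • z) = ‖z‖ • v := congrArg (fun w : Pt => ‖z‖ • w) h
          rw [smul_smul, mul_inv_cancel₀ hznorm.ne', one_smul] at h'
          calc z = ‖z‖ • v := h'
            _ = (‖z‖ * ‖x‖⁻¹) • x := by rw [hvdef, smul_smul]
        have h3 : gauge M z = (‖z‖ * ‖x‖⁻¹) * gauge M x := by
          nth_rewrite 1 [h2]
          rw [gauge_smul_of_nonneg (by positivity), smul_eq_mul]
        rw [hz1, hx1, mul_one] at h3
        calc z = (‖z‖ * ‖x‖⁻¹) • x := h2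
          _ = x := by rw [← h3, one_smul]
      · rw [hψ]
        simp only
        rw [gauge_smul_of_nonneg (inv_pos.2 hznorm).le, smul_eq_mul,
          hgauge_one z hzfr, mul_one, smul_smul, inv_inv,
          mul_inv_cancel₀ hznorm.ne', one_smul]
  rw [← key]
  exact (aux_sphere_compl_preconnected hvnorm).image ψ hψcont

/-- The frontier of a compact convex body, minus one point, is preconnected. -/
lemma aux_punctured_frontier {M : Set Pt} (hM : IsCompact M) (hMconv : Convex ℝ M)
    {o : Pt} (ho : o ∈ interior M) {x : Pt} (hx : x ∈ frontier M) :
    IsPreconnected (frontier M \ {x}) := by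
  set e : Pt ≃ₜ Pt := Homeomorph.addLeft (-o) with he
  have himg : ∀ S : Set Pt, e '' S = (-o) +ᵥ S := fun S => aux_vadd_image (-o) S
  have hM0 : IsCompact (e '' M) := hM.image e.continuous
  have hM0conv : Convex ℝ (e '' M) := by rw [himg]; exact hMconv.vadd _
  have h00 : (0 : Pt) ∈ interior (e '' M) := by
    rw [← e.image_interior]
    exact ⟨o, ho, by simp [he]⟩
  have hx0 : e x ∈ frontier (e '' M) := by
    rw [← e.image_frontier]
    exact ⟨x, hx, rfl⟩
  have hpc := aux_punctured_frontier_zero hM0 hM0conv h00 hx0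
  have him : e '' (frontier M \ {x}) = frontier (e '' M) \ {e x} := by
    rw [Set.image_diff e.injective, e.image_frontier, Set.image_singleton]
  have := hpc.image e.symm e.symm.continuous.continuousOn
  have hsymm : ⇑e.symm '' (⇑e '' (frontier M \ {x})) = frontier M \ {x} := by
    rw [Set.image_image]; simp
  rwa [← him, hsymm] at this

/-- Support normal from a separating functional. -/
lemma aux_support {K : Set Pt} {f : Pt →L[ℝ] ℝ} {z a : Pt} (hzK : z ∈ K) (haK : a ∈ K)
    (ha : f a < f z) (hle : ∀ b ∈ K, f b ≤ f z) :
    ∃ u : Pt, u ≠ 0 ∧ IsSupportNormalAt K u z ∧ ∀ y : Pt, (inner ℝ u y : ℝ) = f y := by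
  set u : Pt := (InnerProductSpace.toDual ℝ Pt).symm f with hu
  have hinner : ∀ y : Pt, (inner ℝ u y : ℝ) = f y := fun y => InnerProductSpace.toDual_symm_apply
  refine ⟨u, ?_, ⟨hzK, fun b hb => ?_⟩, hinner⟩
  · intro h
    have h1 := hinner a
    have h2 := hinner z
    rw [h, inner_zero_left] at h1 h2
    rw [← h1, ← h2] at ha
    exact lt_irrefl _ ha
  · rw [hinner, hinner]; exact hle b hb

theorem stmt12 (K : Set Pt) (hK : IsCompact K) (hconv : Convex ℝ K)
    (hint : (interior K).Nonempty)
    (p x : Pt) (hp : p ∈ frontier K) (hx : x ∈ frontier K) (hpx : p ≠ x)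
    -- `px` is not an affine diameter: no parallel supporting lines at `p` and `x`
    (hdiam : ¬ ∃ u : Pt, u ≠ 0 ∧ IsSupportNormalAt K u p ∧
      (IsSupportNormalAt K u x ∨ IsSupportNormalAt K (-u) x)) :
    ∃ q y : Pt, q ∈ frontier K ∧ y ∈ frontier K ∧ p + q = x + y ∧
      ¬ Collinear ℝ {p, x, q} := by
  by_contra hcon
  push_neg at hcon
  have hKcl : IsClosed K := hK.isClosed
  have hfrsub : frontier K ⊆ K := hKcl.frontier_subset
  have hpK : p ∈ K := hfrsub hp
  have hxK : x ∈ K := hfrsub hx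
  obtain ⟨o₀, ho₀⟩ := hint
  set v : Pt := x - p with hvdef
  have hv0 : v ≠ 0 := by rw [hvdef]; exact sub_ne_zero.2 (Ne.symm hpx)
  set e : Pt ≃ₜ Pt := Homeomorph.addLeft v with he
  set K' : Set Pt := v +ᵥ K with hK'def
  have hK'img : K' = e '' K := (aux_vadd_image v K).symm
  have hK'cpt : IsCompact K' := hK'img ▸ hK.image e.continuous
  have hK'cl : IsClosed K' := hK'cpt.isClosed
  have hK'conv : Convex ℝ K' := hconv.vadd v
  have hfrK' : frontier K' = v +ᵥ frontier K := by
    rw [hK'img, ← e.image_frontier, aux_vadd_image]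
  have hintK' : interior K' = v +ᵥ interior K := by
    rw [hK'img, ← e.image_interior, aux_vadd_image]
  have hmemK' : ∀ z : Pt, z ∈ K' ↔ z - v ∈ K := fun z => aux_mem_vadd v K z
  have hmemfrK' : ∀ z : Pt, z ∈ frontier K' ↔ z - v ∈ frontier K := fun z => by
    rw [hfrK']; exact aux_mem_vadd v _ z
  have hmemintK' : ∀ z : Pt, z ∈ interior K' ↔ z - v ∈ interior K := fun z => by
    rw [hintK']; exact aux_mem_vadd v _ z
  -- points interior on a line through an interior point and points of the set
  have hint_of : ∀ (S : Set Pt) (z : Pt), z ∈ S → z ∉ frontier S → z ∈ interior S := by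
    intro S z hz hzf
    by_contra h
    exact hzf (by rw [← closure_diff_interior]; exact ⟨subset_closure hz, h⟩)
  -- reformulation of the contradiction hypothesis
  have hnoq : ∀ z : Pt, z ∈ frontier K → z - v ∈ frontier K → ∃ t : ℝ, z = p + t • v := by
    intro z hz1 hz2
    have hcol : Collinear ℝ {p, x, z} := hcon z (z - v) hz1 hz2 (by rw [hvdef]; abel)
    rw [collinear_iff_of_mem (Set.mem_insert p _)] at hcol
    obtain ⟨w, hw⟩ := hcol
    obtain ⟨r₁, hr₁⟩ := hw x (by simp)
    obtain ⟨r₂, hr₂⟩ := hw z (by simp)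
    rw [vadd_eq_add] at hr₁ hr₂
    have hr₁0 : r₁ ≠ 0 := by
      intro h; rw [h, zero_smul, zero_add] at hr₁; exact hpx hr₁.symm
    refine ⟨r₂ / r₁, ?_⟩
    have hvw : v = r₁ • w := by rw [hvdef, hr₁]; abel
    rw [hr₂, hvw, smul_smul, div_mul_cancel₀ _ hr₁0]
    abel
  -- Step 1 : the line through p and x meets the interior of K
  have hLint : ∃ t₀ : ℝ, p + t₀ • v ∈ interior K := by
    by_contra hno
    push_neg at hno
    set Lset : Set Pt := Set.range (fun t : ℝ => p + t • v) with hL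
    have hLconv : Convex ℝ Lset := by
      rintro _ ⟨t₁, rfl⟩ _ ⟨t₂, rfl⟩ a b ha hb hab
      refine ⟨a * t₁ + b * t₂, ?_⟩
      show p + (a * t₁ + b * t₂) • v = a • (p + t₁ • v) + b • (p + t₂ • v)
      have h5 : a • (p + t₁ • v) + b • (p + t₂ • v)
          = (a + b) • p + (a * t₁ + b * t₂) • v := by
        rw [smul_add, smul_add, smul_smul, smul_smul, add_smul, add_smul]; abel
      rw [h5, hab, one_smul]
    have hdisj : Disjoint (interior K) Lset := by
      rw [Set.disjoint_right]
      rintro _ ⟨t, rfl⟩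
      exact hno t
    obtain ⟨f, c, hfc1, hfc2⟩ :=
      geometric_hahn_banach_open (hconv.interior) isOpen_interior hLconv hdisj
    have hle : ∀ b ∈ K, f b ≤ c := aux_le_on_closed hKcl hconv ho₀ hfc1
    have hpc : f p = c := le_antisymm (hle p hpK) (hfc2 p ⟨0, by simp⟩)
    have hxc : f x = c := le_antisymm (hle x hxK) (hfc2 x ⟨1, by show p + (1:ℝ) • v = x; rw [one_smul, hvdef]; abel⟩)
    obtain ⟨u, hu0, hup, hinner⟩ := aux_support hpK (interior_subset ho₀)
      (by have := hfc1 o₀ ho₀; linarith) (fun b hb => by have := hle b hb; linarith)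
    apply hdiam
    refine ⟨u, hu0, hup, Or.inl ⟨hxK, fun b hb => ?_⟩⟩
    rw [hinner, hinner]
    have := hle b hb; linarith
  obtain ⟨t₀, ht₀⟩ := hLint
  -- Step 2 : the lens M = K ∩ K' has nonempty interior
  set M : Set Pt := K ∩ K' with hMdef
  have hxM : x ∈ M := ⟨hxK, (hmemK' x).2 (by rw [hvdef, sub_sub_cancel]; exact hpK)⟩
  have hintM_eq : interior M = interior K ∩ interior K' := interior_inter
  have hintM : (interior M).Nonempty := by
    rw [hintM_eq]
    by_contra hno
    rw [Set.not_nonempty_iff_eq_empty, ← Set.disjoint_iff_inter_eq_empty] at hno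
    obtain ⟨f, c, hfc1, hfc2⟩ := geometric_hahn_banach_open_open hconv.interior
      isOpen_interior hK'conv.interior isOpen_interior hno
    have ho₀' : v + o₀ ∈ interior K' := (hmemintK' _).2 (by rw [add_sub_cancel_left]; exact ho₀)
    have hle : ∀ b ∈ K, f b ≤ c := aux_le_on_closed hKcl hconv ho₀ hfc1
    have hge : ∀ b ∈ K', c ≤ f b := by
      have hneg := aux_le_on_closed hK'cl hK'conv ho₀' (f := -f) (c := -c)
        (fun a ha => by
          have := hfc2 a ha
          simp only [ContinuousLinearMap.neg_apply]
          linarith)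
      intro b hb
      have := hneg b hb
      simp only [ContinuousLinearMap.neg_apply] at this
      linarith
    have hxK' : x ∈ K' := (hmemK' x).2 (by rw [hvdef, sub_sub_cancel]; exact hpK)
    have hxc : f x = c := le_antisymm (hle x hxK) (hge x hxK')
    obtain ⟨u, hu0, hux, hinner⟩ := aux_support hxK (interior_subset ho₀)
      (by have := hfc1 o₀ ho₀; linarith) (fun b hb => by have := hle b hb; linarith)
    apply hdiam
    refine ⟨-u, neg_ne_zero.2 hu0, ⟨hpK, fun b hb => ?_⟩, Or.inr (by rw [neg_neg]; exact hux)⟩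
    have hbv : b + v ∈ K' := (hmemK' _).2 (by rw [add_sub_cancel_right]; exact hb)
    have h1 : c ≤ f (b + v) := hge _ hbv
    have h2 : f x = f p + f v := by
      have hxpv : x = p + v := by rw [hvdef]; abel
      rw [hxpv, map_add]
    have h3 : f (b + v) = f b + f v := map_add f b v
    have h4 : f p ≤ f b := by rw [h2] at hxc; rw [h3] at h1; linarith
    rw [inner_neg_left, inner_neg_left, hinner, hinner]
    linarith
  obtain ⟨o, hoM⟩ := hintM
  have hMcpt : IsCompact M := hK.inter_right hK'cl
  have hMconv : Convex ℝ M := hconv.inter hK'conv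
  have hMsubK : M ⊆ K := Set.inter_subset_left
  have hMsubK' : M ⊆ K' := Set.inter_subset_right
  have hoK : o ∈ interior K := (hintM_eq ▸ hoM).1
  have hxfrM : x ∈ frontier M := by
    rw [← closure_diff_interior, hMcpt.isClosed.closure_eq]
    refine ⟨hxM, fun h => ?_⟩
    have hxint : x ∈ interior K := (hintM_eq ▸ h).1
    rw [← closure_diff_interior] at hx
    exact hx.2 hxint
  -- Step 3 : the only common frontier point of K and K' on the line is x
  have hq0 : p + (0 : ℝ) • v = p := by simp
  have hq1 : p + (1 : ℝ) • v = x := by rw [one_smul, hvdef]; abel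
  have hxfrb : p + (1 : ℝ) • v ∈ frontier K := by rw [hq1]; exact hx
  have hxKb : p + (1 : ℝ) • v ∈ K := by rw [hq1]; exact hxK
  have hpfrb : p + (0 : ℝ) • v ∈ frontier K := by rw [hq0]; exact hp
  have hpKb : p + (0 : ℝ) • v ∈ K := by rw [hq0]; exact hpK
  have hne_t₀ : ∀ t : ℝ, p + t • v ∈ frontier K → t ≠ t₀ := by
    intro t ht hteq
    rw [hteq, ← closure_diff_interior] at ht
    exact ht.2 ht₀
  have hbetween : ∀ t t₁ : ℝ, (t₀ < t ∧ t < t₁ ∨ t₁ < t ∧ t < t₀) →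
      p + t₁ • v ∈ K → p + t • v ∈ frontier K → False := by
    intro t t₁ hcase hmem hfr
    rcases hcase with ⟨h1, h2⟩ | ⟨h1, h2⟩
    · exact aux_no_between hconv ht₀ hmem hfr (aux_seg_param h1 h2)
    · have hseg := aux_seg_param (a := p) (w := v) h1 h2
      rw [openSegment_symm] at hseg
      exact aux_no_between hconv ht₀ hmem hfr hseg
  have ht₀pos : 0 < t₀ := by
    rcases lt_trichotomy t₀ 0 with h | h | h
    · exact absurd (hbetween 0 1 (Or.inl ⟨h, one_pos⟩) hxKb hpfrb) not_false
    · exact absurd h (Ne.symm (hne_t₀ 0 hpfrb))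
    · exact h
  have ht₀lt1 : t₀ < 1 := by
    rcases lt_trichotomy t₀ 1 with h | h | h
    · exact h
    · exact absurd h (Ne.symm (hne_t₀ 1 hxfrb))
    · exact absurd (hbetween 1 0 (Or.inr ⟨one_pos, h⟩) hpKb hxfrb) not_false
  have hfrparam : ∀ t : ℝ, p + t • v ∈ frontier K → t = 0 ∨ t = 1 := by
    intro t ht
    rcases lt_trichotomy t t₀ with hlt | heq | hgt
    · left
      by_contra ht0
      rcases lt_trichotomy t 0 with h | h | h
      · exact hbetween 0 t (Or.inr ⟨h, ht₀pos⟩) (hfrsub ht) hpfrb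
      · exact ht0 h
      · exact hbetween t 0 (Or.inr ⟨h, hlt⟩) hpKb ht
    · exact absurd heq (hne_t₀ t ht)
    · right
      by_contra ht1
      rcases lt_trichotomy t 1 with h | h | h
      · exact hbetween t 1 (Or.inl ⟨hgt, h⟩) hxKb ht
      · exact ht1 h
      · exact hbetween 1 t (Or.inl ⟨ht₀lt1, h⟩) (hfrsub ht) hxfrb
  have hABx : ∀ z : Pt, z ∈ frontier K → z - v ∈ frontier K → z = x := by
    intro z hz1 hz2
    obtain ⟨t, rfl⟩ := hnoq z hz1 hz2
    have h1 := hfrparam t hz1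
    have h2 : p + t • v - v = p + (t - 1) • v := by rw [sub_smul, one_smul]; abel
    have h2' := hfrparam (t - 1) (h2 ▸ hz2)
    rcases h1 with h1 | h1
    · exfalso
      rcases h2' with h2'' | h2'' <;> rw [h1] at h2'' <;> norm_num at h2''
    · rw [h1, hq1]
  -- Step 4 : both parts of the frontier of M are nontrivial
  have hBnontriv : ∃ z ∈ frontier M, z ∉ frontier K := by
    by_contra hno
    push_neg at hno
    have hKsubM : K ⊆ M := aux_body_eq hMcpt hMconv hoM hconv hMsubK hno
    have hcont : Continuous fun z : Pt => (inner ℝ v z : ℝ) :=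
      continuous_const.inner continuous_id
    obtain ⟨m, hmK, hmin⟩ := hK.exists_isMinOn ⟨p, hpK⟩ hcont.continuousOn
    have hmK' : m ∈ K' := hMsubK' (hKsubM hmK)
    have hmvK : m - v ∈ K := (hmemK' m).1 hmK'
    have h1 : (inner ℝ v m : ℝ) ≤ inner ℝ v (m - v) := hmin hmvK
    have h2 : (inner ℝ v (m - v) : ℝ) = inner ℝ v m - inner ℝ v v := inner_sub_right v m v
    have h3 : (0 : ℝ) < inner ℝ v v := by
      rw [real_inner_self_eq_norm_mul_norm]
      have := norm_pos_iff.2 hv0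
      positivity
    rw [h2] at h1
    linarith
  have hAnontriv : ∃ z ∈ frontier M, z ∉ frontier K' := by
    by_contra hno
    push_neg at hno
    have hK'subM : K' ⊆ M := aux_body_eq hMcpt hMconv hoM hK'conv hMsubK' hno
    have hcont : Continuous fun z : Pt => (inner ℝ v z : ℝ) :=
      continuous_const.inner continuous_id
    obtain ⟨m, hmK, hmax⟩ := hK.exists_isMaxOn ⟨p, hpK⟩ hcont.continuousOn
    have hmvK' : m + v ∈ K' := (hmemK' _).2 (by rw [add_sub_cancel_right]; exact hmK)
    have hmvK : m + v ∈ K := hMsubK (hK'subM hmvK')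
    have h1 : (inner ℝ v (m + v) : ℝ) ≤ inner ℝ v m := hmax hmvK
    have h2 : (inner ℝ v (m + v) : ℝ) = inner ℝ v m + inner ℝ v v := inner_add_right v m v
    have h3 : (0 : ℝ) < inner ℝ v v := by
      rw [real_inner_self_eq_norm_mul_norm]
      have := norm_pos_iff.2 hv0
      positivity
    rw [h2] at h1
    linarith
  -- Step 5 : contradiction with preconnectedness of the punctured frontier of M
  have hpcM := aux_punctured_frontier hMcpt hMconv hoM hxfrM
  obtain ⟨z₁, hz₁M, hz₁K⟩ := hBnontriv
  obtain ⟨z₂, hz₂M, hz₂K'⟩ := hAnontriv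
  have hxfrK' : x ∈ frontier K' := (hmemfrK' x).2 (by rw [hvdef, sub_sub_cancel]; exact hp)
  have h1 : z₁ ∈ frontier M \ {x} := by
    refine ⟨hz₁M, fun h => hz₁K ?_⟩
    rw [Set.mem_singleton_iff] at h
    rw [h]; exact hx
  have h2 : z₂ ∈ frontier M \ {x} := by
    refine ⟨hz₂M, fun h => hz₂K' ?_⟩
    rw [Set.mem_singleton_iff] at h
    rw [h]; exact hxfrK'
  have hcover : frontier M \ {x} ⊆ (frontier K')ᶜ ∪ (frontier K)ᶜ := by
    rintro z ⟨hz, hzx⟩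
    rw [Set.mem_union]
    by_contra h
    push_neg at h
    simp only [Set.notMem_compl_iff] at h
    exact hzx (Set.mem_singleton_iff.2 (hABx z h.2 ((hmemfrK' z).1 h.1)))
  have hne1 : ((frontier M \ {x}) ∩ (frontier K')ᶜ).Nonempty := ⟨z₂, h2, hz₂K'⟩
  have hne2 : ((frontier M \ {x}) ∩ (frontier K)ᶜ).Nonempty := ⟨z₁, h1, hz₁K⟩
  obtain ⟨z, hzM, hzK', hzK⟩ := hpcM _ _ (isOpen_compl_iff.2 isClosed_frontier)
    (isOpen_compl_iff.2 isClosed_frontier) hcover hne1 hne2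
  -- z is a frontier point of M missing both frontiers, contradiction
  have hzMem : z ∈ M := hMcpt.isClosed.frontier_subset hzM.1
  have hzint : z ∈ interior M := by
    rw [hintM_eq]
    exact ⟨hint_of K z hzMem.1 hzK, hint_of K' z hzMem.2 hzK'⟩
  rw [← closure_diff_interior] at hzM
  exact hzM.1.2 hzint
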